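/- For δ₁, δ₂, δ₃ ∈ (0,1], define F^♯(δ₁,δ₂,δ₃) := 1 − (|sin(πδ₂)|/(πδ₁δ₂δ₃))·√((δ₁−δ₁²)(δ₃−δ₃²)). Then F^♯(δ,δ,δ) > 0 whenever δ ∈ [0.43, 1]. In particular, δ³ − (sin(πδ)/π)·(δ − δ²) > 0 for δ ∈ [0.43, 1). -/
import Mathlib


/-- `F♯(δ₁, δ₂, δ₃)` from the sieve theorem for short intervals. -/
noncomputable def calFsharp (δ₁ δ₂ δ₃ : ℝ) : ℝ :=
  1 - |Real.sin (Real.pi * δ₂)| / (Real.pi * δ₁ * δ₂ * δ₃) *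
        Real.sqrt ((δ₁ - δ₁ ^ 2) * (δ₃ - δ₃ ^ 2))

lemma key_18 {δ : ℝ} (h1 : (0.43 : ℝ) ≤ δ) (h2 : δ ≤ 1) :
    |Real.sin (Real.pi * δ)| * (δ - δ ^ 2) < Real.pi * δ * δ * δ := by
  have hpi := Real.pi_gt_d6
  have hnn : (0:ℝ) ≤ δ - δ ^ 2 := by nlinarith
  have hs : |Real.sin (Real.pi * δ)| ≤ 1 :=
    abs_le.mpr ⟨Real.neg_one_le_sin _, Real.sin_le_one _⟩
  have : |Real.sin (Real.pi * δ)| * (δ - δ ^ 2) ≤ 1 * (δ - δ ^ 2) :=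
    mul_le_mul_of_nonneg_right hs hnn
  have hd : (0:ℝ) < δ := by linarith
  have h5 : (0:ℝ) < (3.141592:ℝ) * δ ^ 2 + δ - 1 := by nlinarith [sq_nonneg (δ - 0.43)]
  have h6 : (0:ℝ) < δ * ((3.141592:ℝ) * δ ^ 2 + δ - 1) := mul_pos hd h5
  have h7 : (0:ℝ) < (Real.pi - 3.141592) * (δ * δ * δ) :=
    mul_pos (by linarith) (mul_pos (mul_pos hd hd) hd)
  nlinarith

theorem stmt_18 :
    (∀ δ : ℝ, δ ∈ Set.Icc (0.43 : ℝ) 1 → 0 < calFsharp δ δ δ) ∧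
      ∀ δ : ℝ, δ ∈ Set.Ico (0.43 : ℝ) 1 →
        0 < δ ^ 3 - Real.sin (Real.pi * δ) / Real.pi * (δ - δ ^ 2) := by
  constructor
  · rintro δ ⟨h1, h2⟩
    have hpi := Real.pi_gt_d6
    have hnn : (0:ℝ) ≤ δ - δ ^ 2 := by nlinarith
    have hd : (0:ℝ) < δ := by linarith
    have hpos : (0:ℝ) < Real.pi * δ * δ * δ :=
      mul_pos (mul_pos (mul_pos Real.pi_pos hd) hd) hd
    have hk := key_18 h1 h2
    unfold calFsharp
    rw [Real.sqrt_mul_self hnn, div_mul_eq_mul_div, sub_pos, div_lt_one hpos]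
    exact hk
  · rintro δ ⟨h1, h2⟩
    have hpi := Real.pi_gt_d6
    have hpipos := Real.pi_pos
    have hk := key_18 h1 h2.le
    have hs : Real.sin (Real.pi * δ) ≤ |Real.sin (Real.pi * δ)| := le_abs_self _
    have hnn : (0:ℝ) ≤ δ - δ ^ 2 := by nlinarith
    have h3 : Real.sin (Real.pi * δ) * (δ - δ ^ 2) < Real.pi * δ ^ 3 := by
      calc Real.sin (Real.pi * δ) * (δ - δ ^ 2)
          ≤ |Real.sin (Real.pi * δ)| * (δ - δ ^ 2) := mul_le_mul_of_nonneg_right hs hnn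
        _ < Real.pi * δ * δ * δ := hk
        _ = Real.pi * δ ^ 3 := by ring
    rw [sub_pos, div_mul_eq_mul_div, div_lt_iff₀ hpipos]
    linarith
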